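/- Let Φ : Mₙ(ℂ) → Mₙ(ℂ) be a positive unital linear map, and let X ∈ Mₙ(ℂ) be a normal matrix (X Xᴴ = Xᴴ X). Then Φ(X Xᴴ) − Φ(X) Φ(Xᴴ) is positive semidefinite. -/

import Mathlib

open Matrix
open scoped ComplexOrder

namespace Stmt11Aux
set_option maxHeartbeats 1000000

lemma toEuclideanLin_mul {n : ℕ} (M N : Matrix (Fin n) (Fin n) ℂ) :
    Matrix.toEuclideanLin (M * N) = (Matrix.toEuclideanLin M) ∘ₗ (Matrix.toEuclideanLin N) := by
  apply LinearMap.ext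
  intro x
  simp only [LinearMap.comp_apply, Matrix.toEuclideanLin_apply]
  congr 1
  rw [Matrix.mulVec_mulVec]

/-- From an internal orthogonal family of submodules, extract an orthonormal basis each of
whose vectors lies in one of the submodules. -/
lemma exists_subordinate_basis {ι : Type*} [DecidableEq ι] {E : Type*} [NormedAddCommGroup E]
    [InnerProductSpace ℂ E] [FiniteDimensional ℂ E] {n : ℕ}
    (hn : Module.finrank ℂ E = n) {V : ι → Submodule ℂ E}
    (hint : DirectSum.IsInternal V)
    (horth : OrthogonalFamily ℂ (fun i => V i) fun i => (V i).subtypeₗᵢ) :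
    ∃ (w : OrthonormalBasis (Fin n) ℂ E) (f : Fin n → ι), ∀ a, w a ∈ V (f a) := by
  classical
  have hsfin : {i : ι | V i ≠ ⊥}.Finite :=
    Submodule.finite_ne_bot_of_iSupIndep hint.submodule_iSupIndep
  haveI : Fintype {i : ι // V i ≠ ⊥} := hsfin.fintype
  have hint' : DirectSum.IsInternal (fun i : {i : ι // V i ≠ ⊥} => V (i : ι)) := by
    rw [DirectSum.isInternal_submodule_iff_iSupIndep_and_iSup_eq_top]
    refine ⟨hint.submodule_iSupIndep.comp Subtype.val_injective, ?_⟩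
    apply le_antisymm le_top
    rw [← hint.submodule_iSup_eq_top]
    apply iSup_le
    intro i
    by_cases h : V i = ⊥
    · rw [h]; exact bot_le
    · exact le_iSup_of_le ⟨i, h⟩ le_rfl
  have horth' : OrthogonalFamily ℂ (fun i : {i : ι // V i ≠ ⊥} => V (i : ι))
      fun i => (V (i : ι)).subtypeₗᵢ :=
    fun i j hij v w => horth (fun h => hij (Subtype.ext h)) v w
  exact ⟨hint'.subordinateOrthonormalBasis hn horth',
    fun a => (hint'.subordinateOrthonormalBasisIndex hn a horth').1,
    fun a => hint'.subordinateOrthonormalBasis_subordinate hn a horth'⟩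

/-- Joint orthonormal eigenbasis for two commuting symmetric operators. -/
lemma exists_joint_eigenbasis {n : ℕ}
    (A B : EuclideanSpace ℂ (Fin n) →ₗ[ℂ] EuclideanSpace ℂ (Fin n))
    (hA : A.IsSymmetric) (hB : B.IsSymmetric) (hAB : Commute A B) :
    ∃ (w : OrthonormalBasis (Fin n) ℂ (EuclideanSpace ℂ (Fin n))) (μ ν : Fin n → ℂ),
      (∀ a, A (w a) = μ a • w a) ∧ (∀ a, B (w a) = ν a • w a) ∧
      (∀ a, (starRingEnd ℂ) (μ a) = μ a) ∧ (∀ a, (starRingEnd ℂ) (ν a) = ν a) := by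
  classical
  have hint := LinearMap.IsSymmetric.directSum_isInternal_of_commute hA hB hAB
  have horth := LinearMap.IsSymmetric.orthogonalFamily_eigenspace_inf_eigenspace hA hB
  have hn : Module.finrank ℂ (EuclideanSpace ℂ (Fin n)) = n := finrank_euclideanSpace_fin
  obtain ⟨w, f, hmem⟩ := exists_subordinate_basis hn hint horth
  refine ⟨w, fun a => (f a).2, fun a => (f a).1, ?_, ?_, ?_, ?_⟩
  all_goals intro a
  · exact Module.End.mem_eigenspace_iff.mp (Submodule.mem_inf.mp (hmem a)).1
  · exact Module.End.mem_eigenspace_iff.mp (Submodule.mem_inf.mp (hmem a)).2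
  · exact hA.conj_eigenvalue_eq_self
      (Module.End.hasEigenvalue_of_hasEigenvector
        ⟨(Submodule.mem_inf.mp (hmem a)).1, w.orthonormal.ne_zero a⟩)
  · exact hB.conj_eigenvalue_eq_self
      (Module.End.hasEigenvalue_of_hasEigenvector
        ⟨(Submodule.mem_inf.mp (hmem a)).2, w.orthonormal.ne_zero a⟩)

/-- Spectral theorem for normal matrices, in orthonormal-eigenbasis form. -/
lemma normal_spectral {n : ℕ} (X : Matrix (Fin n) (Fin n) ℂ) (hX : X * Xᴴ = Xᴴ * X) :
    ∃ (v : Fin n → (Fin n → ℂ)) (lam : Fin n → ℂ),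
      (∀ i j, star (v i) ⬝ᵥ v j = if i = j then 1 else 0) ∧
      (∀ i, X *ᵥ v i = lam i • v i) ∧
      (∀ i, Xᴴ *ᵥ v i = (starRingEnd ℂ) (lam i) • v i) := by
  classical
  set H : Matrix (Fin n) (Fin n) ℂ := (2⁻¹ : ℂ) • (X + Xᴴ) with hHdef
  set K : Matrix (Fin n) (Fin n) ℂ := (-Complex.I * 2⁻¹) • (X - Xᴴ) with hKdef
  have hstar1 : star (2⁻¹ : ℂ) = 2⁻¹ := by simp
  have hstar2 : star (-Complex.I * 2⁻¹ : ℂ) = -(-Complex.I * 2⁻¹) := by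
    simp [Complex.ext_iff]
  have hHherm : H.IsHermitian := by
    show Hᴴ = H
    rw [hHdef, conjTranspose_smul, conjTranspose_add, conjTranspose_conjTranspose, hstar1,
      add_comm]
  have hKherm : K.IsHermitian := by
    show Kᴴ = K
    rw [hKdef, conjTranspose_smul, conjTranspose_sub, conjTranspose_conjTranspose, hstar2,
      neg_smul, ← smul_neg, neg_sub]
  have hIc : Complex.I * (-Complex.I * 2⁻¹) = 2⁻¹ := by
    rw [← mul_assoc, mul_neg, Complex.I_mul_I, neg_neg, one_mul]
  have hXeq : X = H + Complex.I • K := by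
    rw [hHdef, hKdef, smul_smul, hIc]
    ext i j
    simp only [Matrix.add_apply, Matrix.smul_apply, Matrix.sub_apply, smul_eq_mul]
    ring
  have hXHeq : Xᴴ = H - Complex.I • K := by
    rw [hHdef, hKdef, smul_smul, hIc]
    ext i j
    simp only [Matrix.sub_apply, Matrix.smul_apply, Matrix.add_apply, smul_eq_mul]
    ring
  have h2 : (X + Xᴴ) * (X - Xᴴ) = (X - Xᴴ) * (X + Xᴴ) := by
    simp only [mul_sub, sub_mul, add_mul, mul_add, hX]
    abel
  have hcomm : H * K = K * H := by
    rw [hHdef, hKdef]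
    simp only [smul_mul_assoc, mul_smul_comm, smul_smul]
    rw [h2, mul_comm]
  have hA : (Matrix.toEuclideanLin H).IsSymmetric :=
    Matrix.isHermitian_iff_isSymmetric.mp hHherm
  have hB : (Matrix.toEuclideanLin K).IsSymmetric :=
    Matrix.isHermitian_iff_isSymmetric.mp hKherm
  have hABcomm : Commute (Matrix.toEuclideanLin H) (Matrix.toEuclideanLin K) := by
    show _ * _ = _ * _
    simp only [Module.End.mul_eq_comp, ← toEuclideanLin_mul, hcomm]
  obtain ⟨w, μ, ν, hAw, hBw, hμ, hν⟩ := exists_joint_eigenbasis _ _ hA hB hABcomm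
  refine ⟨fun a => WithLp.equiv 2 (Fin n → ℂ) (w a),
    fun a => μ a + Complex.I * ν a, ?_, ?_, ?_⟩
  · intro i j
    have := orthonormal_iff_ite.mp w.orthonormal i j
    simpa [PiLp.inner_apply, dotProduct, RCLike.inner_apply, WithLp.equiv, mul_comm] using this
  · intro a
    have hx : Matrix.toEuclideanLin X (w a) = (μ a + Complex.I * ν a) • w a := by
      have hsplit : Matrix.toEuclideanLin X
          = Matrix.toEuclideanLin H + Complex.I • Matrix.toEuclideanLin K := by
        rw [hXeq, map_add, _root_.map_smul, _root_.map_smul]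
      rw [hsplit, LinearMap.add_apply, LinearMap.smul_apply, hAw, hBw, smul_smul, ← add_smul]
    have := congrArg (WithLp.equiv 2 (Fin n → ℂ)) hx
    simpa [Matrix.ofLp_toEuclideanLin_apply] using this
  · intro a
    have hx : Matrix.toEuclideanLin Xᴴ (w a) = (μ a - Complex.I * ν a) • w a := by
      have hsplit : Matrix.toEuclideanLin Xᴴ
          = Matrix.toEuclideanLin H - Complex.I • Matrix.toEuclideanLin K := by
        rw [hXHeq, map_sub, _root_.map_smul, _root_.map_smul]
      rw [hsplit, LinearMap.sub_apply, LinearMap.smul_apply, hAw, hBw, smul_smul, ← sub_smul]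
    have hconj : (starRingEnd ℂ) (μ a + Complex.I * ν a) = μ a - Complex.I * ν a := by
      rw [map_add, _root_.map_mul, hν a, hμ a, Complex.conj_I]
      ring
    rw [hconj]
    have := congrArg (WithLp.equiv 2 (Fin n → ℂ)) hx
    simpa [Matrix.ofLp_toEuclideanLin_apply] using this

end Stmt11Aux

open Stmt11Aux in
set_option maxHeartbeats 1000000 in
/-- a positive unital linear map `Φ` on `Mₙ(ℂ)` satisfies the
Kadison–Schwarz inequality at every normal matrix `X`. -/
theorem stmt_11 (n : ℕ)
    (Φ : Matrix (Fin n) (Fin n) ℂ →ₗ[ℂ] Matrix (Fin n) (Fin n) ℂ)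
    (hunital : Φ 1 = 1)
    (hpos : ∀ A : Matrix (Fin n) (Fin n) ℂ, A.PosSemidef → (Φ A).PosSemidef)
    (X : Matrix (Fin n) (Fin n) ℂ) (hX : X * Xᴴ = Xᴴ * X) :
    (Φ (X * Xᴴ) - Φ X * Φ Xᴴ).PosSemidef := by
  classical
  obtain ⟨v, lam, hvorth, hXv, hXHv⟩ := normal_spectral X hX
  set P : Fin n → Matrix (Fin n) (Fin n) ℂ := fun i => Matrix.vecMulVec (v i) (star (v i))
    with hPdef
  -- each P i is positive semidefinite
  have hPpos : ∀ i, (P i).PosSemidef := by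
    intro i
    have h1 : P i = Matrix.replicateCol (Fin 1) (v i) * (Matrix.replicateCol (Fin 1) (v i))ᴴ := by
      rw [Matrix.conjTranspose_replicateCol]
      exact Matrix.vecMulVec_eq (Fin 1) _ _
    rw [h1]
    exact Matrix.posSemidef_self_mul_conjTranspose _
  -- the P i sum to 1
  have hPsum : ∑ i, P i = 1 := by
    set U : Matrix (Fin n) (Fin n) ℂ := Matrix.of (fun j i => v i j) with hUdef
    have hUU : Uᴴ * U = 1 := by
      ext i j
      have := hvorth i j
      simpa [Matrix.mul_apply, Matrix.conjTranspose_apply, hUdef, dotProduct,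
        Matrix.one_apply, mul_comm] using this
    have hUU' : U * Uᴴ = 1 := mul_eq_one_comm.mp hUU
    calc ∑ i, P i = U * Uᴴ := by
          ext j k
          simp [Matrix.sum_apply, hPdef, Matrix.vecMulVec_apply, Matrix.mul_apply, hUdef,
            Matrix.conjTranspose_apply]
      _ = 1 := hUU'
  -- action of X and Xᴴ on the P i
  have hXP : ∀ i, X * P i = lam i • P i := by
    intro i
    ext j k
    have hxj : ∑ m, X j m * v i m = lam i * v i j := by
      simpa [Matrix.mulVec, dotProduct, Pi.smul_apply, smul_eq_mul] using
        congrFun (hXv i) j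
    calc (X * P i) j k = (∑ m, X j m * v i m) * (star (v i) k) := by
          simp [Matrix.mul_apply, hPdef, Matrix.vecMulVec_apply, Finset.sum_mul, mul_assoc]
      _ = (lam i • P i) j k := by
          rw [hxj]; simp [hPdef, Matrix.vecMulVec_apply, mul_assoc]
  have hXHP : ∀ i, Xᴴ * P i = (starRingEnd ℂ) (lam i) • P i := by
    intro i
    ext j k
    have hxj : ∑ m, Xᴴ j m * v i m = (starRingEnd ℂ) (lam i) * v i j := by
      simpa [Matrix.mulVec, dotProduct, Pi.smul_apply, smul_eq_mul] using
        congrFun (hXHv i) j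
    calc (Xᴴ * P i) j k = (∑ m, Xᴴ j m * v i m) * (star (v i) k) := by
          simp [Matrix.mul_apply, hPdef, Matrix.vecMulVec_apply, Finset.sum_mul, mul_assoc]
      _ = ((starRingEnd ℂ) (lam i) • P i) j k := by
          rw [hxj]; simp [hPdef, Matrix.vecMulVec_apply, mul_assoc]
  -- decompositions
  have hXdec : X = ∑ i, lam i • P i := by
    calc X = X * ∑ i, P i := by rw [hPsum, mul_one]
      _ = ∑ i, lam i • P i := by rw [Finset.mul_sum]; exact Finset.sum_congr rfl fun i _ => hXP i
  have hXHdec : Xᴴ = ∑ i, (starRingEnd ℂ) (lam i) • P i := by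
    calc Xᴴ = Xᴴ * ∑ i, P i := by rw [hPsum, mul_one]
      _ = ∑ i, (starRingEnd ℂ) (lam i) • P i := by
          rw [Finset.mul_sum]; exact Finset.sum_congr rfl fun i _ => hXHP i
  have hXXHdec : X * Xᴴ = ∑ i, (lam i * (starRingEnd ℂ) (lam i)) • P i := by
    calc X * Xᴴ = X * ∑ i, (starRingEnd ℂ) (lam i) • P i := by rw [← hXHdec]
      _ = ∑ i, (lam i * (starRingEnd ℂ) (lam i)) • P i := by
          rw [Finset.mul_sum]
          refine Finset.sum_congr rfl fun i _ => ?_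
          rw [mul_smul_comm, hXP, smul_smul, mul_comm]
  -- apply Φ
  set Q : Fin n → Matrix (Fin n) (Fin n) ℂ := fun i => Φ (P i) with hQdef
  have hQpos : ∀ i, (Q i).PosSemidef := fun i => hpos _ (hPpos i)
  have hQherm : ∀ i, (Q i)ᴴ = Q i := fun i => (hQpos i).1
  have hQsum : ∑ i, Q i = 1 := by rw [hQdef, ← map_sum, hPsum, hunital]
  have hΦX : Φ X = ∑ i, lam i • Q i := by
    rw [hXdec, map_sum]
    exact Finset.sum_congr rfl fun i _ => by rw [_root_.map_smul]
  have hΦXH : Φ Xᴴ = ∑ i, (starRingEnd ℂ) (lam i) • Q i := by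
    rw [hXHdec, map_sum]
    exact Finset.sum_congr rfl fun i _ => by rw [_root_.map_smul]
  have hΦXXH : Φ (X * Xᴴ) = ∑ i, (lam i * (starRingEnd ℂ) (lam i)) • Q i := by
    rw [hXXHdec, map_sum]
    exact Finset.sum_congr rfl fun i _ => by rw [_root_.map_smul]
  -- (Φ X)ᴴ = Φ Xᴴ
  have hBH : (Φ X)ᴴ = Φ Xᴴ := by
    rw [hΦX, hΦXH, Matrix.conjTranspose_sum]
    exact Finset.sum_congr rfl fun i _ => by
      rw [Matrix.conjTranspose_smul, hQherm i]; rfl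
  -- the key algebraic identity
  have key : Φ (X * Xᴴ) - Φ X * Φ Xᴴ
      = ∑ i, (lam i • 1 - Φ X) * Q i * (lam i • 1 - Φ X)ᴴ := by
    have expand : ∀ i, (lam i • 1 - Φ X) * Q i * (lam i • 1 - Φ X)ᴴ
        = (lam i * (starRingEnd ℂ) (lam i)) • Q i
          - lam i • (Q i * (Φ X)ᴴ) - (starRingEnd ℂ) (lam i) • (Φ X * Q i)
          + Φ X * Q i * (Φ X)ᴴ := by
      intro i
      have hct : (lam i • (1 : Matrix (Fin n) (Fin n) ℂ) - Φ X)ᴴ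
          = (starRingEnd ℂ) (lam i) • 1 - (Φ X)ᴴ := by
        rw [Matrix.conjTranspose_sub, Matrix.conjTranspose_smul, Matrix.conjTranspose_one]
        rfl
      rw [hct]
      simp only [sub_mul, mul_sub, smul_mul_assoc, Matrix.mul_smul, mul_smul_comm,
        one_mul, mul_one, smul_smul, smul_sub]
      rw [mul_comm ((starRingEnd ℂ) (lam i)) (lam i)]
      abel
    rw [hΦXXH]
    calc (∑ i, (lam i * (starRingEnd ℂ) (lam i)) • Q i) - Φ X * Φ Xᴴ
        = (∑ i, (lam i * (starRingEnd ℂ) (lam i)) • Q i)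
          - (∑ i, lam i • (Q i * (Φ X)ᴴ))
          - (∑ i, (starRingEnd ℂ) (lam i) • (Φ X * Q i))
          + (∑ i, Φ X * Q i * (Φ X)ᴴ) := by
          have e1 : ∑ i, lam i • (Q i * (Φ X)ᴴ) = Φ X * Φ Xᴴ := by
            rw [← hBH]
            calc ∑ i, lam i • (Q i * (Φ X)ᴴ) = (∑ i, lam i • Q i) * (Φ X)ᴴ := by
                  rw [Finset.sum_mul]
                  exact Finset.sum_congr rfl fun i _ => (Matrix.smul_mul _ _ _).symm
              _ = Φ X * (Φ X)ᴴ := by rw [← hΦX]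
          have e2 : ∑ i, (starRingEnd ℂ) (lam i) • (Φ X * Q i) = Φ X * Φ Xᴴ := by
            calc ∑ i, (starRingEnd ℂ) (lam i) • (Φ X * Q i)
                = Φ X * (∑ i, (starRingEnd ℂ) (lam i) • Q i) := by
                  rw [Finset.mul_sum]
                  exact Finset.sum_congr rfl fun i _ => (Matrix.mul_smul _ _ _).symm
              _ = Φ X * Φ Xᴴ := by rw [← hΦXH]
          have e3 : ∑ i, Φ X * Q i * (Φ X)ᴴ = Φ X * Φ Xᴴ := by
            calc ∑ i, Φ X * Q i * (Φ X)ᴴ = Φ X * (∑ i, Q i) * (Φ X)ᴴ := by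
                  rw [Finset.mul_sum, Finset.sum_mul]
              _ = Φ X * Φ Xᴴ := by rw [hQsum, mul_one, hBH]
          rw [e1, e2, e3]
          abel
      _ = ∑ i, ((lam i * (starRingEnd ℂ) (lam i)) • Q i
            - lam i • (Q i * (Φ X)ᴴ) - (starRingEnd ℂ) (lam i) • (Φ X * Q i)
            + Φ X * Q i * (Φ X)ᴴ) := by
          rw [Finset.sum_add_distrib, Finset.sum_sub_distrib, Finset.sum_sub_distrib]
      _ = ∑ i, (lam i • 1 - Φ X) * Q i * (lam i • 1 - Φ X)ᴴ := by
          exact Finset.sum_congr rfl fun i _ => (expand i).symm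
  rw [key]
  apply Finset.sum_induction _ _ (fun a b ha hb => ha.add hb) Matrix.PosSemidef.zero
  intro i _
  exact (hQpos i).mul_mul_conjTranspose_same _
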